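/- (Closed form of the symmetric sketch-and-project update.) Let A be an n×n real symmetric positive definite matrix, S an n×τ real matrix such that SᵀAS is invertible, and X_k an n×n real symmetric matrix. Define H := S(SᵀAS)⁻¹Sᵀ and X_{k+1} := H + (I − HA) X_k (I − AH). Then: (i) X_{k+1} is symmetric; (ii) SᵀA X_{k+1} = Sᵀ; and (iii) for every n×n real symmetric matrix X satisfying SᵀAX = Sᵀ, one has ‖A^{1/2}(X_{k+1} − X_k)A^{1/2}‖_F ≤ ‖A^{1/2}(X − X_k)A^{1/2}‖_F. That is, X_{k+1} is a minimizer of ‖X − X_k‖_{F(A)} over symmetric X with SᵀAX = Sᵀ. -/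

import Mathlib

open Matrix

section

open scoped ComplexOrder

noncomputable def Matrix.PosSemidef.sqrt {n : Type*} [Fintype n] [DecidableEq n] {𝕜 : Type*}
    [RCLike 𝕜] {A : Matrix n n 𝕜} (hA : A.PosSemidef) : Matrix n n 𝕜 :=
  hA.1.eigenvectorUnitary.1 * diagonal ((↑) ∘ (√·) ∘ hA.1.eigenvalues) *
  (star hA.1.eigenvectorUnitary : Matrix n n 𝕜)

end

lemma aux_sqrt_mul_self {n : ℕ} {A : Matrix (Fin n) (Fin n) ℝ} (hA : A.PosSemidef) :
    hA.sqrt * hA.sqrt = A := by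
  have hU : (star hA.1.eigenvectorUnitary : Matrix (Fin n) (Fin n) ℝ) *
      hA.1.eigenvectorUnitary.1 = 1 := Unitary.coe_star_mul_self _
  have key : hA.sqrt * hA.sqrt = hA.1.eigenvectorUnitary.1 *
      (diagonal (RCLike.ofReal ∘ (√·) ∘ hA.1.eigenvalues) *
      ((star hA.1.eigenvectorUnitary : Matrix (Fin n) (Fin n) ℝ) * hA.1.eigenvectorUnitary.1) *
      diagonal (RCLike.ofReal ∘ (√·) ∘ hA.1.eigenvalues)) *
      (star hA.1.eigenvectorUnitary : Matrix (Fin n) (Fin n) ℝ) := by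
    simp only [Matrix.PosSemidef.sqrt, Matrix.mul_assoc]
  rw [key, hU, Matrix.mul_one, diagonal_mul_diagonal]
  conv_rhs => rw [hA.1.spectral_theorem, Unitary.conjStarAlgAut_apply]
  congr 3
  funext i
  simp [Real.mul_self_sqrt (hA.eigenvalues_nonneg i)]

lemma aux_sqrt_transpose {n : ℕ} {A : Matrix (Fin n) (Fin n) ℝ} (hA : A.PosSemidef) :
    hA.sqrtᴴ = hA.sqrt := by
  simp [Matrix.PosSemidef.sqrt, Matrix.star_eq_conjTranspose, Matrix.mul_assoc]

/-- Auxiliary: if `P` is a symmetric projection and `E1 = PE + EP - PEP`, then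
`trace(E1ᵀE1) ≤ trace(EᵀE)`. -/
lemma aux_trace_proj_le {n : ℕ} (P E E1 : Matrix (Fin n) (Fin n) ℝ)
    (hPP : P * P = P) (hPt : Pᵀ = P)
    (hE1 : E1 = P * E + E * P - P * E * P) :
    (E1ᵀ * E1).trace ≤ (Eᵀ * E).trace := by
  set D : Matrix (Fin n) (Fin n) ℝ := (1 - P) * E * (1 - P) with hDdef
  have hD : E - E1 = D := by rw [hE1, hDdef]; noncomm_ring
  have hE : E = E1 + D := by rw [← hD]; abel
  have hQP : (1 - P) * P = 0 := by rw [sub_mul, one_mul, hPP, sub_self]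
  have hPQ : P * (1 - P) = 0 := by rw [mul_sub, mul_one, hPP, sub_self]
  have hQE1Q : (1 - P) * E1 * (1 - P) = 0 := by
    have expand : (1 - P) * E1 * (1 - P) =
        ((1 - P) * P) * (E * (1 - P)) + ((1 - P) * E) * (P * (1 - P))
          - ((1 - P) * P) * ((E * P) * (1 - P)) := by
      rw [hE1]; noncomm_ring
    rw [expand, hQP, hPQ]
    simp
  have hQE1tQ : (1 - P) * E1ᵀ * (1 - P) = 0 := by
    have := congrArg Matrix.transpose hQE1Q
    simpa [Matrix.transpose_mul, Matrix.transpose_sub, Matrix.transpose_one, hPt,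
      Matrix.mul_assoc] using this
  have hcross : (E1ᵀ * D).trace = 0 := by
    have h1 : E1ᵀ * D = (E1ᵀ * ((1 - P) * E)) * (1 - P) := by rw [hDdef]; noncomm_ring
    rw [h1, Matrix.trace_mul_comm]
    have h2 : (1 - P) * (E1ᵀ * ((1 - P) * E)) = ((1 - P) * E1ᵀ * (1 - P)) * E := by
      noncomm_ring
    rw [h2, hQE1tQ, Matrix.zero_mul, Matrix.trace_zero]
  have hcross' : (Dᵀ * E1).trace = 0 := by
    calc (Dᵀ * E1).trace = ((E1ᵀ * D)ᵀ).trace := by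
          rw [Matrix.transpose_mul E1ᵀ D, Matrix.transpose_transpose]
      _ = (E1ᵀ * D).trace := Matrix.trace_transpose _
      _ = 0 := hcross
  have hDD : 0 ≤ (Dᵀ * D).trace := by
    rw [Matrix.trace]
    refine Finset.sum_nonneg fun i _ => ?_
    rw [Matrix.diag_apply, Matrix.mul_apply]
    refine Finset.sum_nonneg fun j _ => ?_
    rw [Matrix.transpose_apply]
    exact mul_self_nonneg _
  have hsplit : (Eᵀ * E).trace =
      (E1ᵀ * E1).trace + (E1ᵀ * D).trace + (Dᵀ * E1).trace + (Dᵀ * D).trace := by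
    rw [hE]
    rw [Matrix.transpose_add, Matrix.add_mul, Matrix.mul_add, Matrix.mul_add,
      Matrix.trace_add, Matrix.trace_add, Matrix.trace_add]
    ring
  rw [hsplit, hcross, hcross']
  linarith

/-- (Closed form of the symmetric sketch-and-project update.)
With A symmetric positive definite, SᵀAS invertible, X_k symmetric,
H := S(SᵀAS)⁻¹Sᵀ and X_{k+1} := H + (I − HA)X_k(I − AH), we have:
(i) X_{k+1} is symmetric; (ii) SᵀA X_{k+1} = Sᵀ; and (iii) X_{k+1} minimizes
‖A^{1/2}(X − X_k)A^{1/2}‖_F over all symmetric X with SᵀAX = Sᵀ. -/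
theorem symmetric_sketch_and_project_closed_form {n τ : ℕ}
    (A : Matrix (Fin n) (Fin n) ℝ) (hA : A.PosDef)
    (S : Matrix (Fin n) (Fin τ) ℝ) (hS : IsUnit (Sᵀ * A * S))
    (Xk : Matrix (Fin n) (Fin n) ℝ) (hXk : Xk.IsSymm)
    (H Xk1 : Matrix (Fin n) (Fin n) ℝ)
    (hH : H = S * (Sᵀ * A * S)⁻¹ * Sᵀ)
    (hX1 : Xk1 = H + (1 - H * A) * Xk * (1 - A * H)) :
    Xk1.IsSymm ∧ Sᵀ * A * Xk1 = Sᵀ ∧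
    ∀ X : Matrix (Fin n) (Fin n) ℝ, X.IsSymm → Sᵀ * A * X = Sᵀ →
      Real.sqrt (((hA.posSemidef.sqrt * (Xk1 - Xk) * hA.posSemidef.sqrt)ᵀ *
          (hA.posSemidef.sqrt * (Xk1 - Xk) * hA.posSemidef.sqrt)).trace)
        ≤ Real.sqrt (((hA.posSemidef.sqrt * (X - Xk) * hA.posSemidef.sqrt)ᵀ *
          (hA.posSemidef.sqrt * (X - Xk) * hA.posSemidef.sqrt)).trace) := by
  have hAt : Aᵀ = A := by
    have h : Aᴴ = A := hA.1
    rwa [Matrix.conjTranspose_eq_transpose_of_trivial] at h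
  have hXkt : Xkᵀ = Xk := hXk
  set B := hA.posSemidef.sqrt with hBdef
  have hBB : B * B = A := aux_sqrt_mul_self hA.posSemidef
  have hBt : Bᵀ = B := by
    have h : Bᴴ = B := aux_sqrt_transpose hA.posSemidef
    rwa [Matrix.conjTranspose_eq_transpose_of_trivial] at h
  -- inverse facts
  have hdet : IsUnit (Sᵀ * A * S).det := (Matrix.isUnit_iff_isUnit_det _).mp hS
  have hinv1 : (Sᵀ * A * S) * (Sᵀ * A * S)⁻¹ = 1 := Matrix.mul_nonsing_inv _ hdet
  have hinv2 : (Sᵀ * A * S)⁻¹ * (Sᵀ * A * S) = 1 := Matrix.nonsing_inv_mul _ hdet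
  have hSASt : (Sᵀ * A * S)ᵀ = Sᵀ * A * S := by
    rw [Matrix.transpose_mul, Matrix.transpose_mul, Matrix.transpose_transpose, hAt,
      Matrix.mul_assoc]
  have hinvT : ((Sᵀ * A * S)⁻¹)ᵀ = (Sᵀ * A * S)⁻¹ := by
    rw [Matrix.transpose_nonsing_inv, hSASt]
  have hHt : Hᵀ = H := by
    rw [hH, Matrix.transpose_mul, Matrix.transpose_mul, Matrix.transpose_transpose, hinvT,
      ← Matrix.mul_assoc]
  -- (ii)
  have hSAH : Sᵀ * A * H = Sᵀ := by
    rw [hH]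
    calc Sᵀ * A * (S * (Sᵀ * A * S)⁻¹ * Sᵀ)
        = ((Sᵀ * A * S) * (Sᵀ * A * S)⁻¹) * Sᵀ := by
          simp only [Matrix.mul_assoc]
      _ = Sᵀ := by rw [hinv1, Matrix.one_mul]
  have h0 : Sᵀ * A * (1 - H * A) = 0 := by
    rw [Matrix.mul_sub, Matrix.mul_one, ← Matrix.mul_assoc, hSAH]
    exact sub_self _
  have hii : Sᵀ * A * Xk1 = Sᵀ := by
    have h0' : Sᵀ * A * ((1 - H * A) * Xk * (1 - A * H)) = 0 := by
      rw [Matrix.mul_assoc (1 - H * A) Xk (1 - A * H), ← Matrix.mul_assoc (Sᵀ * A),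
        h0, Matrix.zero_mul]
    rw [hX1, Matrix.mul_add, hSAH, h0', add_zero]
  -- (i)
  have hi : Xk1.IsSymm := by
    show Xk1ᵀ = Xk1
    rw [hX1]
    simp only [Matrix.transpose_add, Matrix.transpose_mul, Matrix.transpose_sub,
      Matrix.transpose_one, hHt, hAt, hXkt, Matrix.mul_assoc]
  refine ⟨hi, hii, ?_⟩
  intro X hXs hXc
  have hXt : Xᵀ = X := hXs
  -- key algebraic facts
  have hHAH : H * A * H = H := by
    rw [hH]
    calc S * (Sᵀ * A * S)⁻¹ * Sᵀ * A * (S * (Sᵀ * A * S)⁻¹ * Sᵀ)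
        = S * ((Sᵀ * A * S)⁻¹ * (Sᵀ * A * S) * ((Sᵀ * A * S)⁻¹ * Sᵀ)) := by
          simp only [Matrix.mul_assoc]
      _ = S * (Sᵀ * A * S)⁻¹ * Sᵀ := by
          rw [hinv2, Matrix.one_mul]
          simp only [Matrix.mul_assoc]
  have hHAX : H * A * X = H := by
    rw [hH, Matrix.mul_assoc (S * (Sᵀ * A * S)⁻¹) Sᵀ A,
      Matrix.mul_assoc (S * (Sᵀ * A * S)⁻¹) (Sᵀ * A) X, hXc]
  have hXAH : X * A * H = H := by
    have h := congrArg Matrix.transpose hHAX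
    simpa [Matrix.transpose_mul, hAt, hHt, hXt, Matrix.mul_assoc] using h
  -- product computations with B
  have sandL : ∀ M N : Matrix (Fin n) (Fin n) ℝ,
      (B * M * B) * (B * N * B) = B * (M * A * N) * B := by
    intro M N
    calc (B * M * B) * (B * N * B) = B * (M * ((B * B) * N)) * B := by
          simp only [Matrix.mul_assoc]
      _ = B * (M * A * N) * B := by rw [hBB]; simp only [Matrix.mul_assoc]
  set P : Matrix (Fin n) (Fin n) ℝ := B * H * B with hPdef
  have hPP : P * P = P := by rw [hPdef, sandL, hHAH]
  have hPt : Pᵀ = P := by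
    rw [hPdef, Matrix.transpose_mul, Matrix.transpose_mul, hBt, hHt, Matrix.mul_assoc]
  -- the closed-form identity
  have hPZ : P * (B * X * B) = P := by rw [hPdef, sandL, hHAX]
  have hZP : (B * X * B) * P = P := by rw [hPdef, sandL, hXAH]
  have hPY : P * (B * Xk * B) = B * (H * A * Xk) * B := by rw [hPdef, sandL]
  have hYP : (B * Xk * B) * P = B * (Xk * A * H) * B := by rw [hPdef, sandL]
  have hPYP : (B * (H * A * Xk) * B) * P = B * (H * A * Xk * A * H) * B := by
    rw [hPdef, sandL]
  have hEsplit : B * (X - Xk) * B = B * X * B - B * Xk * B := by noncomm_ring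
  have hE1 : B * (Xk1 - Xk) * B =
      P * (B * (X - Xk) * B) + (B * (X - Xk) * B) * P - P * (B * (X - Xk) * B) * P := by
    have e1 : B * (Xk1 - Xk) * B =
        B * H * B - B * (H * A * Xk) * B - B * (Xk * A * H) * B
          + B * (H * A * Xk * A * H) * B := by
      rw [hX1]; noncomm_ring
    have r1 : P * (B * (X - Xk) * B) = B * H * B - B * (H * A * Xk) * B := by
      rw [hEsplit, Matrix.mul_sub, hPZ, hPY, hPdef]
    have r2 : (B * (X - Xk) * B) * P = B * H * B - B * (Xk * A * H) * B := by
      rw [hEsplit, Matrix.sub_mul, hZP, hYP, hPdef]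
    have r3 : P * (B * (X - Xk) * B) * P =
        B * H * B - B * (H * A * Xk * A * H) * B := by
      rw [r1, Matrix.sub_mul, hPYP]
      rw [show (B * H * B) * P = P * P from by rw [hPdef], hPP, hPdef]
    rw [e1, r3, r2, r1]
    abel
  exact Real.sqrt_le_sqrt (aux_trace_proj_le P (B * (X - Xk) * B) (B * (Xk1 - Xk) * B)
    hPP hPt hE1)
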